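/- Let F = [[F1, F12], [F12ᵀ, F2]] ∈ ℝ^{(n1+m)×(n1+m)} be symmetric positive definite with F1 ∈ ℝ^{n1×n1}, F12 ∈ ℝ^{n1×m}, F2 ∈ ℝ^{m×m}. Let C1 ∈ ℝ^{c×n1}, ε > 0, ρ_p > 0, δ, ω, q ∈ ℝ^c with q having positive entries. Define η_i = ε + δ_i² + Σ_j |(C1 F1⁻¹ C1ᵀ)_{ij}| q_j / q_i, γ_i = η_i/2 + ω_i², Γ = diag(γ), l_i = √(2γ_i − η_i) / (γ_i ρ_p), L = diag(l), X = Lᵀ L, and Λ = Γ⁻¹. Then the matrix 2Γ − ρ_p² Γ X Γ − C1 F1⁻¹ C1ᵀ is positive definite, and for any L_Γ ∈ ℝ^{c×c} with L_Γᵀ L_Γ = 2Γ − ρ_p² Γ X Γ − C1 F1⁻¹ C1ᵀ, any invertible L_F ∈ ℝ^{m×m} with L_Fᵀ L_F = F2 − F12ᵀ F1⁻¹ F12, and any Ũ ∈ ℝ^{m×c} with Ũᵀ Ũ = I_c, the matrix Ĉ2 = C1 F1⁻¹ F12 − L_Γᵀ Ũᵀ L_F makes the block matrix [[F1, F12, −C1ᵀ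 Λ], [F12ᵀ, F2, −Ĉ2ᵀ Λ], [−Λ C1, −Λ Ĉ2, 2Λ − ρ_p² X]] positive semidefinite. -/

import Mathlib

open Matrix Finset


lemma aux_diag_dom_posdef {c : ℕ} (S : Matrix (Fin c) (Fin c) ℝ)
    (hS : S.IsHermitian) (η q : Fin c → ℝ) (hq : ∀ i, 0 < q i)
    (ε : ℝ) (hε : 0 < ε)
    (hη : ∀ i, ε + ∑ j, |S i j| * q j / q i ≤ η i) :
    (Matrix.diagonal η - S).PosDef := by
  have hsym : ∀ i j, S j i = S i j := fun i j => by
    have := congrFun (congrFun hS.eq i) j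
    simpa [Matrix.conjTranspose_apply] using this
  refine Matrix.PosDef.of_dotProduct_mulVec_pos ?_ ?_
  · exact (Matrix.isHermitian_diagonal η).sub hS
  · intro x hx
    have hstar : star x = x := by simp
    rw [hstar]
    have hform : x ⬝ᵥ ((Matrix.diagonal η - S) *ᵥ x)
        = ∑ i, η i * x i ^ 2 - ∑ i, ∑ j, x i * (S i j * x j) := by
      rw [Matrix.sub_mulVec, dotProduct_sub]
      congr 1
      · refine Finset.sum_congr rfl fun i _ => ?_
        rw [Matrix.mulVec_diagonal]; ring
      · simp only [dotProduct, Matrix.mulVec, Finset.mul_sum]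
    rw [hform]
    -- key pointwise AM-GM bound
    have key2 : ∀ i j : Fin c, |x i| * |x j| ≤ (q j / q i * x i ^ 2 + q i / q j * x j ^ 2) / 2 := by
      intro i j
      have h1 : (0:ℝ) < q i := hq i
      have h2 : (0:ℝ) < q j := hq j
      have e1 : Real.sqrt (q j / q i) ^ 2 = q j / q i := Real.sq_sqrt (by positivity)
      have e2 : Real.sqrt (q i / q j) ^ 2 = q i / q j := Real.sq_sqrt (by positivity)
      have e3 : Real.sqrt (q j / q i) * Real.sqrt (q i / q j) = 1 := by
        rw [← Real.sqrt_mul (by positivity)]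
        rw [show q j / q i * (q i / q j) = 1 by field_simp]
        exact Real.sqrt_one
      have h := sq_nonneg (Real.sqrt (q j / q i) * |x i| - Real.sqrt (q i / q j) * |x j|)
      have hexp : (Real.sqrt (q j / q i) * |x i| - Real.sqrt (q i / q j) * |x j|) ^ 2
          = Real.sqrt (q j / q i) ^ 2 * |x i| ^ 2 + Real.sqrt (q i / q j) ^ 2 * |x j| ^ 2
            - 2 * (Real.sqrt (q j / q i) * Real.sqrt (q i / q j)) * (|x i| * |x j|) := by
        ring
      rw [hexp, e1, e2, e3] at h
      have hxx : |x i| ^ 2 = x i ^ 2 := sq_abs _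
      have hyy : |x j| ^ 2 = x j ^ 2 := sq_abs _
      rw [hxx, hyy] at h
      linarith
    have key : ∑ i, ∑ j, x i * (S i j * x j) ≤ ∑ i, ∑ j, |S i j| * (q j / q i * x i ^ 2) := by
      calc ∑ i, ∑ j, x i * (S i j * x j)
          ≤ ∑ i, ∑ j, |S i j| * (q j / q i * x i ^ 2 + q i / q j * x j ^ 2) / 2 := by
            refine Finset.sum_le_sum fun i _ => Finset.sum_le_sum fun j _ => ?_
            have h1 : x i * (S i j * x j) ≤ |S i j| * (|x i| * |x j|) := by
              calc x i * (S i j * x j) ≤ |x i * (S i j * x j)| := le_abs_self _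
                _ = |S i j| * (|x i| * |x j|) := by rw [abs_mul, abs_mul]; ring
            have h2 := key2 i j
            have h3 : (0:ℝ) ≤ |S i j| := abs_nonneg _
            calc x i * (S i j * x j) ≤ |S i j| * (|x i| * |x j|) := h1
              _ ≤ |S i j| * ((q j / q i * x i ^ 2 + q i / q j * x j ^ 2) / 2) :=
                  mul_le_mul_of_nonneg_left h2 h3
              _ = |S i j| * (q j / q i * x i ^ 2 + q i / q j * x j ^ 2) / 2 := by ring
        _ = ∑ i, ∑ j, |S i j| * (q j / q i * x i ^ 2) := by
            have hsplit : ∀ i j : Fin c,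
                |S i j| * (q j / q i * x i ^ 2 + q i / q j * x j ^ 2) / 2
                = (|S i j| * (q j / q i * x i ^ 2)) / 2
                  + (|S i j| * (q i / q j * x j ^ 2)) / 2 := fun i j => by ring
            simp_rw [hsplit, Finset.sum_add_distrib]
            have e : ∑ i, ∑ j, |S i j| * (q i / q j * x j ^ 2) / 2
                = ∑ i, ∑ j, |S i j| * (q j / q i * x i ^ 2) / 2 := by
              rw [Finset.sum_comm]
              refine Finset.sum_congr rfl fun i _ => Finset.sum_congr rfl fun j _ => ?_
              rw [hsym i j]
            rw [show (∑ i, ∑ j, (|S i j| * (q j / q i * x i ^ 2)) / 2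
                + ∑ i, ∑ j, (|S i j| * (q i / q j * x j ^ 2)) / 2 : ℝ)
              = ∑ i, ∑ j, (|S i j| * (q j / q i * x i ^ 2)) / 2
                + ∑ i, ∑ j, (|S i j| * (q i / q j * x j ^ 2)) / 2 from rfl]
            rw [e]
            rw [← Finset.sum_add_distrib]
            refine Finset.sum_congr rfl fun i _ => ?_
            rw [← Finset.sum_add_distrib]
            refine Finset.sum_congr rfl fun j _ => by ring
    have hsum : ε * ∑ i, x i ^ 2 + ∑ i, ∑ j, |S i j| * (q j / q i * x i ^ 2)
        ≤ ∑ i, η i * x i ^ 2 := by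
      rw [Finset.mul_sum, ← Finset.sum_add_distrib]
      refine Finset.sum_le_sum fun i _ => ?_
      have h1 : ε * x i ^ 2 + ∑ j, |S i j| * (q j / q i * x i ^ 2)
          = (ε + ∑ j, |S i j| * q j / q i) * x i ^ 2 := by
        rw [add_mul, Finset.sum_mul]
        congr 1
        exact Finset.sum_congr rfl fun j _ => by ring
      rw [h1]
      exact mul_le_mul_of_nonneg_right (hη i) (sq_nonneg _)
    have hpos : 0 < ∑ i, x i ^ 2 := by
      obtain ⟨i, hi⟩ := Function.ne_iff.mp hx
      exact Finset.sum_pos' (fun j _ => sq_nonneg _) ⟨i, Finset.mem_univ i, by rw [← sq_abs]; exact pow_pos (abs_pos.mpr hi) 2⟩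
    have : 0 < ε * ∑ i, x i ^ 2 := by positivity
    linarith

lemma aux_neg_fromRows {m₁ m₂ n : ℕ} (A : Matrix (Fin m₁) (Fin n) ℝ) (B : Matrix (Fin m₂) (Fin n) ℝ) :
    -(Matrix.fromRows A B) = Matrix.fromRows (-A) (-B) := by
  ext (i | i) j <;> rfl

lemma aux_neg_fromCols {m n₁ n₂ : ℕ} (A : Matrix (Fin m) (Fin n₁) ℝ) (B : Matrix (Fin m) (Fin n₂) ℝ) :
    -(Matrix.fromCols A B) = Matrix.fromCols (-A) (-B) := by
  ext i (j | j) <;> rfl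


/-- Parameterization of a 2-D convolutional layer followed by a
maximum pooling layer with Lipschitz constant `ρ_p`: the matrix
`2Γ − ρ_p² Γ X Γ − C1 F1⁻¹ C1ᵀ` is positive definite and, for any Cholesky-type
factors `L_Γ`, `L_F` and any `Ũ` with orthonormal columns, the parameterized
`Ĉ2 = C1 F1⁻¹ F12 − L_Γᵀ Ũᵀ L_F` makes the 3×3 block LMI (with bottom-right
block `2Λ − ρ_p² X`) positive semidefinite. -/
theorem conv2d_maxpool_parameterization_satisfies_LMI
    (n1 m c : ℕ)
    (F1 : Matrix (Fin n1) (Fin n1) ℝ) (F12 : Matrix (Fin n1) (Fin m) ℝ)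
    (F2 : Matrix (Fin m) (Fin m) ℝ)
    (hF : (Matrix.fromBlocks F1 F12 F12ᵀ F2).PosDef)
    (C1 : Matrix (Fin c) (Fin n1) ℝ) (ε : ℝ) (hε : 0 < ε)
    (ρp : ℝ) (hρp : 0 < ρp)
    (δ ω q : Fin c → ℝ) (hq : ∀ i, 0 < q i)
    (η : Fin c → ℝ)
    (hη : ∀ i, η i = ε + δ i ^ 2 + ∑ j, |(C1 * F1⁻¹ * C1ᵀ) i j| * q j / q i)
    (γ : Fin c → ℝ) (hγ : ∀ i, γ i = η i / 2 + ω i ^ 2)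
    (Γ : Matrix (Fin c) (Fin c) ℝ) (hΓ : Γ = Matrix.diagonal γ)
    (l : Fin c → ℝ) (hl : ∀ i, l i = Real.sqrt (2 * γ i - η i) / (γ i * ρp))
    (L : Matrix (Fin c) (Fin c) ℝ) (hL : L = Matrix.diagonal l)
    (X : Matrix (Fin c) (Fin c) ℝ) (hX : X = Lᵀ * L)
    (Λ : Matrix (Fin c) (Fin c) ℝ) (hΛ : Λ = Γ⁻¹) :
    ((2 : ℝ) • Γ - ρp ^ 2 • (Γ * X * Γ) - C1 * F1⁻¹ * C1ᵀ).PosDef ∧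
    ∀ (LΓ : Matrix (Fin c) (Fin c) ℝ),
      LΓᵀ * LΓ = (2 : ℝ) • Γ - ρp ^ 2 • (Γ * X * Γ) - C1 * F1⁻¹ * C1ᵀ →
    ∀ (LF : Matrix (Fin m) (Fin m) ℝ), IsUnit LF →
      LFᵀ * LF = F2 - F12ᵀ * F1⁻¹ * F12 →
    ∀ (Ut : Matrix (Fin m) (Fin c) ℝ), Utᵀ * Ut = 1 →
    ∀ (Ch2 : Matrix (Fin c) (Fin m) ℝ),
      Ch2 = C1 * F1⁻¹ * F12 - LΓᵀ * Utᵀ * LF →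
    (Matrix.fromBlocks (Matrix.fromBlocks F1 F12 F12ᵀ F2)
      (Matrix.fromRows (-(C1ᵀ * Λ)) (-(Ch2ᵀ * Λ)))
      (Matrix.fromCols (-(Λ * C1)) (-(Λ * Ch2)))
      ((2 : ℝ) • Λ - ρp ^ 2 • X)).PosSemidef := by
  -- F1 is positive definite
  have hF1 : F1.PosDef := by
    refine Matrix.PosDef.of_dotProduct_mulVec_pos ?_ ?_
    · have hH := hF.isHermitian
      rw [Matrix.isHermitian_fromBlocks_iff] at hH
      exact hH.1
    · intro x hx
      have hy : (Sum.elim x 0 : Fin n1 ⊕ Fin m → ℝ) ≠ 0 := by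
        intro h; apply hx; funext i; exact congrFun h (Sum.inl i)
      have := hF.dotProduct_mulVec_pos hy
      simpa [Matrix.fromBlocks_mulVec, sumElim_dotProduct_sumElim] using this
  have hF1can : ∀ M : Matrix (Fin n1) (Fin c) ℝ, F1 * (F1⁻¹ * M) = M := fun M => by
    rw [← Matrix.mul_assoc, Matrix.mul_nonsing_inv _ hF1.det_pos.ne'.isUnit, Matrix.one_mul]
  have hF1invT : (F1⁻¹)ᵀ = F1⁻¹ := by
    rw [Matrix.transpose_nonsing_inv]
    rw [show F1ᵀ = F1 from ?_]
    rw [← Matrix.conjTranspose_eq_transpose_of_trivial]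
    exact hF1.isHermitian
  have hSsym : (C1 * F1⁻¹ * C1ᵀ).IsHermitian := by
    rw [← Matrix.conjTranspose_eq_transpose_of_trivial C1]
    exact Matrix.isHermitian_mul_mul_conjTranspose _ hF1.isHermitian.inv
  -- positivity facts
  have hηpos : ∀ i, 0 < η i := fun i => by
    rw [hη i]
    have h1 : 0 ≤ ∑ j, |(C1 * F1⁻¹ * C1ᵀ) i j| * q j / q i :=
      Finset.sum_nonneg fun j _ =>
        div_nonneg (mul_nonneg (abs_nonneg _) (hq j).le) (hq i).le
    nlinarith [sq_nonneg (δ i)]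
  have hγpos : ∀ i, 0 < γ i := fun i => by
    rw [hγ i]; nlinarith [sq_nonneg (ω i), hηpos i]
  have h2γη : ∀ i, 0 ≤ 2 * γ i - η i := fun i => by
    rw [hγ i]; nlinarith [sq_nonneg (ω i)]
  have hll : ∀ i, l i * l i = (2 * γ i - η i) / ((γ i * ρp) * (γ i * ρp)) := fun i => by
    rw [hl i, div_mul_div_comm, Real.mul_self_sqrt (h2γη i)]
  -- diagonal computations
  have hDiag : (2 : ℝ) • Γ - ρp ^ 2 • (Γ * X * Γ) = Matrix.diagonal η := by
    rw [hΓ, hX, hL, Matrix.diagonal_transpose, Matrix.diagonal_mul_diagonal,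
      Matrix.diagonal_mul_diagonal, Matrix.diagonal_mul_diagonal,
      ← Matrix.diagonal_smul, ← Matrix.diagonal_smul, Matrix.diagonal_sub]
    refine congrArg Matrix.diagonal (funext fun i => ?_)
    simp only [Pi.smul_apply, Pi.sub_apply, Pi.mul_apply, smul_eq_mul]
    rw [hll i]
    have hγ0 : γ i ≠ 0 := (hγpos i).ne'
    have hρ0 : ρp ≠ 0 := hρp.ne'
    field_simp
    ring
  have hΛd : Λ = Matrix.diagonal fun i => (γ i)⁻¹ := by
    rw [hΛ, hΓ]
    apply Matrix.inv_eq_right_inv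
    rw [Matrix.diagonal_mul_diagonal, ← Matrix.diagonal_one]
    have h : (fun i => γ i * (γ i)⁻¹) = fun _ => (1 : ℝ) :=
      funext fun i => mul_inv_cancel₀ (hγpos i).ne'
    rw [h]
  have hΛsym : Λᵀ = Λ := by rw [hΛd, Matrix.diagonal_transpose]
  have hBR : Λ * (Matrix.diagonal η * Λ) = (2 : ℝ) • Λ - ρp ^ 2 • X := by
    rw [hΛd, hX, hL, Matrix.diagonal_transpose, Matrix.diagonal_mul_diagonal,
      Matrix.diagonal_mul_diagonal, Matrix.diagonal_mul_diagonal,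
      ← Matrix.diagonal_smul, ← Matrix.diagonal_smul, Matrix.diagonal_sub]
    refine congrArg Matrix.diagonal (funext fun i => ?_)
    simp only [Pi.smul_apply, Pi.sub_apply, Pi.mul_apply, smul_eq_mul]
    rw [hll i]
    have hγ0 : γ i ≠ 0 := (hγpos i).ne'
    have hρ0 : ρp ≠ 0 := hρp.ne'
    field_simp
    ring
  -- Part 1
  have hη' : ∀ i, ε + ∑ j, |(C1 * F1⁻¹ * C1ᵀ) i j| * q j / q i ≤ η i := fun i => by
    rw [hη i]; nlinarith [sq_nonneg (δ i)]
  have hPD : (Matrix.diagonal η - C1 * F1⁻¹ * C1ᵀ).PosDef :=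
    aux_diag_dom_posdef _ hSsym η q hq ε hε hη'
  refine ⟨?_, ?_⟩
  · rw [show (2 : ℝ) • Γ - ρp ^ 2 • (Γ * X * Γ) - C1 * F1⁻¹ * C1ᵀ
      = Matrix.diagonal η - C1 * F1⁻¹ * C1ᵀ by rw [hDiag]]
    exact hPD
  -- Part 2
  intro LΓ hLΓ LF hLFu hLF Ut hUt Ch2 hCh2
  have hLFcan : ∀ M : Matrix (Fin m) (Fin c) ℝ, LF * (LF⁻¹ * M) = M := fun M => by
    rw [← Matrix.mul_assoc,
      Matrix.mul_nonsing_inv _ ((Matrix.isUnit_iff_isUnit_det _).mp hLFu), Matrix.one_mul]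
  have hUtcan : ∀ M : Matrix (Fin c) (Fin c) ℝ, Utᵀ * (Ut * M) = M := fun M => by
    rw [← Matrix.mul_assoc, hUt, Matrix.one_mul]
  set K : Matrix (Fin m) (Fin c) ℝ := LF⁻¹ * (Ut * LΓ) with hK
  have hLFK : LF * K = Ut * LΓ := hLFcan _
  set Y1 : Matrix (Fin n1) (Fin c) ℝ := F1⁻¹ * C1ᵀ + F1⁻¹ * (F12 * K) with hY1
  set Y2 : Matrix (Fin m) (Fin c) ℝ := -K with hY2
  set Fb := Matrix.fromBlocks F1 F12 F12ᵀ F2 with hFb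
  have hFsym : Fbᵀ = Fb := by
    rw [← Matrix.conjTranspose_eq_transpose_of_trivial]
    exact hF.isHermitian
  set Y : Matrix (Fin n1 ⊕ Fin m) (Fin c) ℝ := Matrix.fromRows Y1 Y2 with hYdef
  have hY : Fb * Y = Matrix.fromRows C1ᵀ Ch2ᵀ := by
    have e1 : F1 * Y1 + F12 * Y2 = C1ᵀ := by
      rw [hY1, hY2, Matrix.mul_add, hF1can, hF1can, Matrix.mul_neg]
      abel
    have e2 : F12ᵀ * Y1 + F2 * Y2 = Ch2ᵀ := by
      rw [hY1, hY2, hCh2]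
      have hF2 : F2 = LFᵀ * LF + F12ᵀ * F1⁻¹ * F12 := by rw [hLF]; abel
      rw [Matrix.mul_add, Matrix.mul_neg, hF2, Matrix.add_mul]
      rw [show LFᵀ * LF * K = LFᵀ * (Ut * LΓ) by rw [Matrix.mul_assoc, hLFK]]
      rw [Matrix.transpose_sub, Matrix.transpose_mul, Matrix.transpose_mul,
        Matrix.transpose_mul, Matrix.transpose_mul, Matrix.transpose_transpose,
        Matrix.transpose_transpose, hF1invT]
      simp only [Matrix.mul_assoc]
      abel
    rw [hYdef, hFb, Matrix.fromBlocks_mul_fromRows, e1, e2]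
  have hCY : Matrix.fromCols C1 Ch2 * Y = Matrix.diagonal η := by
    rw [hYdef, Matrix.fromCols_mul_fromRows, hY1, hY2, hCh2]
    have hLΓ' : LΓᵀ * LΓ = Matrix.diagonal η - C1 * F1⁻¹ * C1ᵀ := by rw [hLΓ, hDiag]
    rw [Matrix.mul_add, Matrix.mul_neg, Matrix.sub_mul]
    rw [show LΓᵀ * Utᵀ * LF * K = LΓᵀ * LΓ by
      rw [Matrix.mul_assoc, hLFK, Matrix.mul_assoc, hUtcan]]
    rw [hLΓ']
    simp only [Matrix.mul_assoc]
    abel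
  have hYt : Yᵀ * Fb = Matrix.fromCols C1 Ch2 := by
    have h := congrArg Matrix.transpose hY
    rw [Matrix.transpose_mul, hFsym, Matrix.transpose_fromRows C1ᵀ Ch2ᵀ] at h
    exact h
  have hCYt : Yᵀ * Matrix.fromRows C1ᵀ Ch2ᵀ = Matrix.diagonal η := by
    have h := congrArg Matrix.transpose hCY
    rw [Matrix.transpose_mul, Matrix.transpose_fromCols C1 Ch2, Matrix.diagonal_transpose] at h
    exact h
  set W2 : Matrix (Fin n1 ⊕ Fin m) (Fin c) ℝ := -(Y * Λ) with hW2def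
  have hW2T : W2ᵀ = -(Λ * Yᵀ) := by
    rw [hW2def, Matrix.transpose_neg, Matrix.transpose_mul, hΛsym]
  have hFW2' : Fb * W2 = -(Matrix.fromRows C1ᵀ Ch2ᵀ * Λ) := by
    rw [hW2def, Matrix.mul_neg, ← Matrix.mul_assoc, hY]
  have hFW2 : Fb * W2 = Matrix.fromRows (-(C1ᵀ * Λ)) (-(Ch2ᵀ * Λ)) := by
    rw [hFW2', Matrix.fromRows_mul, aux_neg_fromRows]
  have hW2F : W2ᵀ * Fb = Matrix.fromCols (-(Λ * C1)) (-(Λ * Ch2)) := by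
    rw [hW2T, Matrix.neg_mul, Matrix.mul_assoc, hYt, Matrix.mul_fromCols,
      aux_neg_fromCols]
  have hW2FW2 : (W2ᵀ * Fb) * W2 = (2 : ℝ) • Λ - ρp ^ 2 • X := by
    calc (W2ᵀ * Fb) * W2 = W2ᵀ * (Fb * W2) := by rw [Matrix.mul_assoc]
      _ = (-(Λ * Yᵀ)) * (-(Matrix.fromRows C1ᵀ Ch2ᵀ * Λ)) := by rw [hW2T, hFW2']
      _ = (Λ * Yᵀ) * (Matrix.fromRows C1ᵀ Ch2ᵀ * Λ) := by
          rw [Matrix.neg_mul, Matrix.mul_neg, neg_neg]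
      _ = Λ * (Matrix.diagonal η * Λ) := by
          rw [Matrix.mul_assoc Λ, ← Matrix.mul_assoc Yᵀ, hCYt]
      _ = (2 : ℝ) • Λ - ρp ^ 2 • X := hBR
  have hfact : Matrix.fromBlocks Fb
      (Matrix.fromRows (-(C1ᵀ * Λ)) (-(Ch2ᵀ * Λ)))
      (Matrix.fromCols (-(Λ * C1)) (-(Λ * Ch2)))
      ((2 : ℝ) • Λ - ρp ^ 2 • X)
      = (Matrix.fromCols (1 : Matrix (Fin n1 ⊕ Fin m) (Fin n1 ⊕ Fin m) ℝ) W2)ᵀ * Fb * Matrix.fromCols (1 : Matrix (Fin n1 ⊕ Fin m) (Fin n1 ⊕ Fin m) ℝ) W2 := by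
    rw [Matrix.transpose_fromCols, Matrix.transpose_one, Matrix.fromRows_mul,
      Matrix.fromRows_mul_fromCols, Matrix.one_mul, Matrix.mul_one, Matrix.mul_one,
      hW2FW2, hFW2, hW2F]
  rw [hfact]
  have h := hF.posSemidef.conjTranspose_mul_mul_same (Matrix.fromCols (1 : Matrix (Fin n1 ⊕ Fin m) (Fin n1 ⊕ Fin m) ℝ) W2)
  rwa [Matrix.conjTranspose_eq_transpose_of_trivial] at h
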